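/- Let R be a commutative unital ring and let M, N be R-modules such that M and M ⊗_R N are finitely generated projective R-modules and the localization M_𝔭 is nonzero for every prime ideal 𝔭 of R. Then N is a finitely generated projective R-module. -/
import Mathlib

universe u

/-- **Statement 1.** Let `R` be a commutative unital ring and `M`, `N` modules
such that `M` and `M ⊗_R N` are finitely generated projective and `M_𝔭 ≠ 0` for
every prime `𝔭`.  Then `N` is finitely generated projective. -/
theorem statement_1 {R M N : Type u} [CommRing R]
    [AddCommGroup M] [Module R M] [AddCommGroup N] [Module R N]
    [Module.Finite R M] [Module.Projective R M]
    [Module.Finite R (TensorProduct R M N)] [Module.Projective R (TensorProduct R M N)]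
    (h : ∀ (p : Ideal R) (_ : p.IsPrime), Nontrivial (LocalizedModule p.primeCompl M)) :
    Module.Finite R N ∧ Module.Projective R N := by
  classical
  -- the "trace ideal" generators
  set s : Set R := {r | ∃ (F : M →ₗ[R] R) (x : M), F x = r} with hs
  have hspan : Ideal.span s = ⊤ := by
    by_contra hne
    obtain ⟨p, hp, hIp⟩ := Ideal.exists_le_maximal _ hne
    haveI : p.IsPrime := hp.isPrime
    haveI : Nontrivial (LocalizedModule p.primeCompl M) := h p hp.isPrime
    haveI : Module.FinitePresentation R M := Module.finitePresentation_of_projective R M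
    haveI : Module.Free (Localization p.primeCompl) (LocalizedModule p.primeCompl M) :=
      Module.free_of_flat_of_isLocalRing
    set Rₚ := Localization p.primeCompl
    set Mₚ := LocalizedModule p.primeCompl M
    let b := Module.Free.chooseBasis Rₚ Mₚ
    haveI : Nonempty (Module.Free.ChooseBasisIndex Rₚ Mₚ) := b.index_nonempty
    let i : Module.Free.ChooseBasisIndex Rₚ Mₚ := Classical.arbitrary _
    let f := LocalizedModule.mkLinearMap p.primeCompl M
    let gl := Algebra.linearMap R Rₚ
    let g0 : Mₚ →ₗ[R] Rₚ := (b.coord i).restrictScalars R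
    obtain ⟨⟨F, u⟩, hFu⟩ := IsLocalizedModule.surj p.primeCompl
      (IsLocalizedModule.map p.primeCompl f gl) g0
    obtain ⟨⟨m₀, t⟩, hmt⟩ := IsLocalizedModule.mk'_surjective p.primeCompl f (b i)
    have hfm : f m₀ = (t : R) • b i := by
      rw [← hmt]
      simp only [Function.uncurry]
      rw [← Submonoid.smul_def, IsLocalizedModule.mk'_cancel']
    have h1 : (IsLocalizedModule.map p.primeCompl f gl F) (f m₀) = algebraMap R Rₚ (F m₀) :=
      IsLocalizedModule.map_apply _ _ _ _ _
    have h2 : (IsLocalizedModule.map p.primeCompl f gl F) (f m₀)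
        = algebraMap R Rₚ ((u : R) * (t : R)) := by
      have hb : g0 (b i) = 1 := by
        simp [g0, Module.Basis.coord_apply]
      rw [← hFu]
      simp only [Submonoid.smul_def, LinearMap.smul_apply]
      rw [hfm, map_smul, hb, smul_smul, Algebra.smul_def, mul_one]
    have hu : IsUnit (algebraMap R Rₚ (F m₀)) := by
      rw [← h1, h2]
      exact IsLocalization.map_units Rₚ (u * t)
    have hcompl : F m₀ ∈ p.primeCompl :=
      (IsLocalization.AtPrime.isUnit_to_map_iff Rₚ p (F m₀)).mp hu
    exact hcompl (hIp (Ideal.subset_span ⟨F, m₀, rfl⟩))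
  have h1 : (1 : R) ∈ Submodule.span R s := by
    rw [show Submodule.span R s = Ideal.span s from rfl, hspan]; trivial
  obtain ⟨c, hc, hsum⟩ := Submodule.mem_span_set.mp h1
  -- choose witnesses
  have hch : ∀ j : ↥c.support, ∃ (F : M →ₗ[R] R) (x : M), F x = (j : R) :=
    fun j => hc j.2
  choose Fc xc hFc using hch
  let π : (↥c.support → M) →ₗ[R] R := ∑ j : ↥c.support, (c j • Fc j) ∘ₗ LinearMap.proj j
  have hπ : π (fun j => xc j) = 1 := by
    have h2 : π (fun j => xc j) = ∑ j : ↥c.support, c j • (j : R) := by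
      simp only [π, LinearMap.sum_apply, LinearMap.comp_apply, LinearMap.proj_apply,
        LinearMap.smul_apply]
      exact Finset.sum_congr rfl fun j _ => by rw [hFc]
    rw [h2, Finset.sum_coe_sort c.support (fun r => c r • r), ← hsum]
    rfl
  let σ : R →ₗ[R] (↥c.support → M) :=
    LinearMap.toSpanSingleton R (↥c.support → M) (fun j => xc j)
  have hπσ : π ∘ₗ σ = LinearMap.id := by
    ext
    simp [σ, LinearMap.toSpanSingleton_apply, hπ]
  -- tensor with N
  let A : (TensorProduct R (↥c.support → M) N) →ₗ[R] (TensorProduct R R N) := π.rTensor N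
  let B : (TensorProduct R R N) →ₗ[R] (TensorProduct R (↥c.support → M) N) := σ.rTensor N
  have hAB : A ∘ₗ B = LinearMap.id := by
    rw [show A ∘ₗ B = (π ∘ₗ σ).rTensor N from (LinearMap.rTensor_comp N π σ).symm, hπσ,
      LinearMap.rTensor_id]
  let iN : N →ₗ[R] TensorProduct R (↥c.support → M) N :=
    B ∘ₗ (TensorProduct.lid R N).symm.toLinearMap
  let vN : TensorProduct R (↥c.support → M) N →ₗ[R] N :=
    (TensorProduct.lid R N).toLinearMap ∘ₗ A
  have hvi : vN ∘ₗ iN = LinearMap.id := by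
    ext n
    simpa [vN, iN] using congrArg (TensorProduct.lid R N)
      (LinearMap.congr_fun hAB ((TensorProduct.lid R N).symm n))
  -- instances for (↥c.support → M) ⊗ N
  let e : TensorProduct R (↥c.support → M) N ≃ₗ[R] (↥c.support → TensorProduct R M N) :=
    (TensorProduct.comm R (↥c.support → M) N) ≪≫ₗ
      (TensorProduct.piRight R R N (fun _ : ↥c.support => M)) ≪≫ₗ
      (LinearEquiv.piCongrRight fun _ => TensorProduct.comm R N M)
  haveI : Module.Projective R (DirectSum ↥c.support (fun _ => TensorProduct R M N)) :=
    inferInstanceAs (Module.Projective R (DFinsupp (fun _ : ↥c.support => TensorProduct R M N)))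
  haveI : Module.Projective R (↥c.support → TensorProduct R M N) :=
    Module.Projective.of_equiv
      (DirectSum.linearEquivFunOnFintype R ↥c.support (fun _ => TensorProduct R M N))
  haveI : Module.Finite R (TensorProduct R (↥c.support → M) N) := Module.Finite.equiv e.symm
  haveI : Module.Projective R (TensorProduct R (↥c.support → M) N) :=
    Module.Projective.of_equiv e.symm
  refine ⟨?_, ?_⟩
  · exact Module.Finite.of_surjective vN
      (fun n => ⟨iN n, LinearMap.congr_fun hvi n⟩)
  · exact Module.Projective.of_split iN vN hvi
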